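/- For all indices λ, μ, ν ∈ {1,…,7} with λ ≠ μ and λ ≠ ν, one has ⟨e_{λ×μ}, e_{λ×ν}⟩ = ⟨e_μ, e_ν⟩, where e_{λ×μ} := P(e_0, e_λ, e_μ) for λ ≠ μ and e_{λ×λ} := −e_0. -/

import Mathlib

open RealInnerProductSpace

noncomputable section

/-- Euclidean space `ℝ^8`. -/
abbrev E8 : Type := EuclideanSpace ℝ (Fin 8)

/-- The standard orthonormal basis vectors `e_0, …, e_7` of `ℝ^8`. -/
def e (i : Fin 8) : E8 := EuclideanSpace.single i 1

/-- The elementary alternating 4-form `e^i ∧ e^j ∧ e^k ∧ e^l` evaluated on `(u,v,w,x)`. -/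
def wedge4 (i j k l : Fin 8) (u v w x : E8) : ℝ :=
  Matrix.det !![u i, u j, u k, u l;
                v i, v j, v k, v l;
                w i, w j, w k, w l;
                x i, x j, x k, x l]

/-- The standard `Spin(7)`-form `φ₀` on `ℝ^8`:
`φ₀ = e^{0145}+e^{0167}+e^{2345}+e^{2367}+e^{0246}−e^{0257}−e^{1346}+e^{1357}
     −e^{0347}−e^{0356}−e^{1247}−e^{1256}+e^{0123}+e^{4567}`. -/
def phi0 (u v w x : E8) : ℝ :=
    wedge4 0 1 4 5 u v w x + wedge4 0 1 6 7 u v w x + wedge4 2 3 4 5 u v w x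
  + wedge4 2 3 6 7 u v w x + wedge4 0 2 4 6 u v w x - wedge4 0 2 5 7 u v w x
  - wedge4 1 3 4 6 u v w x + wedge4 1 3 5 7 u v w x - wedge4 0 3 4 7 u v w x
  - wedge4 0 3 5 6 u v w x - wedge4 1 2 4 7 u v w x - wedge4 1 2 5 6 u v w x
  + wedge4 0 1 2 3 u v w x + wedge4 4 5 6 7 u v w x

/-- The triple cross product `P : ℝ^8 × ℝ^8 × ℝ^8 → ℝ^8`, determined by
`⟨P(u,v,w), x⟩ = φ₀(u,v,w,x)` for all `x ∈ ℝ^8`. -/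
def P (u v w : E8) : E8 :=
  (WithLp.equiv 2 (Fin 8 → ℝ)).symm (fun i => phi0 u v w (e i))

private theorem det_fin_four {R : Type*} [CommRing R] (A : Matrix (Fin 4) (Fin 4) R) :
    A.det =
      A 0 0 * (A 1 1 * (A 2 2 * A 3 3 - A 2 3 * A 3 2)
             - A 1 2 * (A 2 1 * A 3 3 - A 2 3 * A 3 1)
             + A 1 3 * (A 2 1 * A 3 2 - A 2 2 * A 3 1))
    - A 0 1 * (A 1 0 * (A 2 2 * A 3 3 - A 2 3 * A 3 2)
             - A 1 2 * (A 2 0 * A 3 3 - A 2 3 * A 3 0)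
             + A 1 3 * (A 2 0 * A 3 2 - A 2 2 * A 3 0))
    + A 0 2 * (A 1 0 * (A 2 1 * A 3 3 - A 2 3 * A 3 1)
             - A 1 1 * (A 2 0 * A 3 3 - A 2 3 * A 3 0)
             + A 1 3 * (A 2 0 * A 3 1 - A 2 1 * A 3 0))
    - A 0 3 * (A 1 0 * (A 2 1 * A 3 2 - A 2 2 * A 3 1)
             - A 1 1 * (A 2 0 * A 3 2 - A 2 2 * A 3 0)
             + A 1 2 * (A 2 0 * A 3 1 - A 2 1 * A 3 0)) := by
  rw [Matrix.det_succ_row_zero]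
  norm_num [Fin.sum_univ_four, Matrix.det_fin_three, Matrix.submatrix_apply,
    show ((3 : Fin 4) : ℕ) = 3 from rfl,
    show Fin.succ (0 : Fin 3) = 1 from rfl, show Fin.succ (1 : Fin 3) = 2 from rfl,
    show Fin.succ (2 : Fin 3) = 3 from rfl,
    show (0 : Fin 4).succAbove 0 = 1 from rfl, show (0 : Fin 4).succAbove 1 = 2 from rfl,
    show (0 : Fin 4).succAbove 2 = 3 from rfl,
    show (1 : Fin 4).succAbove 0 = 0 from rfl, show (1 : Fin 4).succAbove 1 = 2 from rfl,
    show (1 : Fin 4).succAbove 2 = 3 from rfl,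
    show (2 : Fin 4).succAbove 0 = 0 from rfl, show (2 : Fin 4).succAbove 1 = 1 from rfl,
    show (2 : Fin 4).succAbove 2 = 3 from rfl,
    show (3 : Fin 4).succAbove 0 = 0 from rfl, show (3 : Fin 4).succAbove 1 = 1 from rfl,
    show (3 : Fin 4).succAbove 2 = 2 from rfl]
  ring

private def dl (i a : Fin 8) : ℤ := if i = a then 1 else 0

private def w4i (i j k l a b c d : Fin 8) : ℤ :=
      dl i a * (dl j b * (dl k c * dl l d - dl l c * dl k d)
             - dl k b * (dl j c * dl l d - dl l c * dl j d)
             + dl l b * (dl j c * dl k d - dl k c * dl j d))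
    - dl j a * (dl i b * (dl k c * dl l d - dl l c * dl k d)
             - dl k b * (dl i c * dl l d - dl l c * dl i d)
             + dl l b * (dl i c * dl k d - dl k c * dl i d))
    + dl k a * (dl i b * (dl j c * dl l d - dl l c * dl j d)
             - dl j b * (dl i c * dl l d - dl l c * dl i d)
             + dl l b * (dl i c * dl j d - dl j c * dl i d))
    - dl l a * (dl i b * (dl j c * dl k d - dl k c * dl j d)
             - dl j b * (dl i c * dl k d - dl k c * dl i d)
             + dl k b * (dl i c * dl j d - dl j c * dl i d))

private def fI (a b c d : Fin 8) : ℤ :=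
    w4i 0 1 4 5 a b c d + w4i 0 1 6 7 a b c d + w4i 2 3 4 5 a b c d
  + w4i 2 3 6 7 a b c d + w4i 0 2 4 6 a b c d - w4i 0 2 5 7 a b c d
  - w4i 1 3 4 6 a b c d + w4i 1 3 5 7 a b c d - w4i 0 3 4 7 a b c d
  - w4i 0 3 5 6 a b c d - w4i 1 2 4 7 a b c d - w4i 1 2 5 6 a b c d
  + w4i 0 1 2 3 a b c d + w4i 4 5 6 7 a b c d

private theorem e_apply (a i : Fin 8) : e a i = ((dl i a : ℤ) : ℝ) := by
  simp [e, dl, EuclideanSpace.single_apply, apply_ite (Int.cast : ℤ → ℝ)]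

private theorem wedge4_eq (i j k l a b c d : Fin 8) :
    wedge4 i j k l (e a) (e b) (e c) (e d) = (w4i i j k l a b c d : ℝ) := by
  simp only [wedge4, det_fin_four, Matrix.cons_val', Matrix.of_apply, Matrix.cons_val_zero,
    Matrix.cons_val_one, Matrix.head_cons, Matrix.cons_val_two, Matrix.cons_val_three,
    Matrix.tail_cons, Matrix.empty_val', Matrix.cons_val_fin_one, Matrix.head_fin_const,
    e_apply, w4i]
  push_cast
  ring

private theorem phi0_eq (a b c d : Fin 8) :
    phi0 (e a) (e b) (e c) (e d) = (fI a b c d : ℝ) := by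
  simp only [phi0, wedge4_eq, fI]
  push_cast
  ring

/-- For `λ, μ, ν ∈ {1,…,7}` with `λ ≠ μ` and `λ ≠ ν`:
`⟨e_{λ×μ}, e_{λ×ν}⟩ = ⟨e_μ, e_ν⟩`, where `e_{λ×μ} = P(e_0, e_λ, e_μ)` for `λ ≠ μ`. -/
theorem inner_cross_eq_inner (l m n : Fin 8) (hl : l ≠ 0) (hm : m ≠ 0) (hn : n ≠ 0)
    (hlm : l ≠ m) (hln : l ≠ n) :
    ⟪P (e 0) (e l) (e m), P (e 0) (e l) (e n)⟫ = ⟪e m, e n⟫ := by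
  have key : ∀ l m n : Fin 8, l ≠ 0 → m ≠ 0 → n ≠ 0 → l ≠ m → l ≠ n →
      (fI 0 l m 0 * fI 0 l n 0 + fI 0 l m 1 * fI 0 l n 1 + fI 0 l m 2 * fI 0 l n 2
       + fI 0 l m 3 * fI 0 l n 3 + fI 0 l m 4 * fI 0 l n 4 + fI 0 l m 5 * fI 0 l n 5
       + fI 0 l m 6 * fI 0 l n 6 + fI 0 l m 7 * fI 0 l n 7)
      = dl 0 m * dl 0 n + dl 1 m * dl 1 n + dl 2 m * dl 2 n + dl 3 m * dl 3 n
        + dl 4 m * dl 4 n + dl 5 m * dl 5 n + dl 6 m * dl 6 n + dl 7 m * dl 7 n := by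
    decide
  simp only [PiLp.inner_apply, RCLike.inner_apply, conj_trivial, Fin.sum_univ_eight, P,
    WithLp.equiv_symm_apply, PiLp.toLp_apply, phi0_eq, e_apply]
  have hk := congrArg (Int.cast : ℤ → ℝ) (key l m n hl hm hn hlm hln)
  push_cast at hk ⊢
  linear_combination hk
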